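/- Let K be ℝ or ℂ, n ≥ 2, and let G be an abelian subgroup of S_n(K) such that the span of F has dimension n−1. Let u, v ∈ K^n with first coordinates u_1 ≠ 0 and v_1 ≠ 0, and let (B_m)_{m∈ℕ} be a sequence in G with lim_{m→∞} B_m u = v. If the sequence (B_m^(1))_{m∈ℕ} of top-left (n−1)×(n−1) blocks is bounded, then the sequence (B_m)_{m∈ℕ} is bounded. -/

import Mathlib

open Matrix Filter Topology

/-- `B` belongs to `S_N(K)`: lower triangular with all diagonal entries equal. -/
def IsSnMatrix {K : Type*} [Field K] {N : ℕ} (B : Matrix (Fin N) (Fin N) K) : Prop :=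
  (∀ i j : Fin N, i < j → B i j = 0) ∧ (∀ i j : Fin N, B i i = B j j)

/-- The set `F = {(B − μ_B I) eᵢ : 1 ≤ i ≤ N−1, B ∈ G}` for a subgroup `G` of `S_N(K)`
(here `μ_B` is the common diagonal entry of `B`). -/
def Fset {K : Type*} [Field K] {N : ℕ} (G : Subgroup (Matrix.GeneralLinearGroup (Fin N) K)) :
    Set (Fin N → K) :=
  {w | ∃ B ∈ G, ∃ i : Fin N, (i : ℕ) < N - 1 ∧
    w = ((B : Matrix (Fin N) (Fin N) K) -
      (B : Matrix (Fin N) (Fin N) K) i i • (1 : Matrix (Fin N) (Fin N) K)).mulVec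
        (Pi.single i 1)}

/-- Let `K = ℝ` or `ℂ`, `N = n + 2 ≥ 2`, and let `G` be an abelian subgroup of `S_N(K)` with
`span F` of dimension `N − 1`. Let `u, v ∈ Kⁿ` with nonzero first coordinates and `(B_m)` a
sequence in `G` with `lim B_m u = v`. If the sequence of top-left `(N−1)×(N−1)` blocks
`(B_m⁽¹⁾)` is bounded, then `(B_m)` is bounded. -/
theorem bounded_of_block_bounded {K : Type*} [RCLike K] (n : ℕ)
    (G : Subgroup (Matrix.GeneralLinearGroup (Fin (n + 2)) K))
    (hGcomm : ∀ A ∈ G, ∀ B ∈ G, A * B = B * A)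
    (hS : ∀ B ∈ G, IsSnMatrix (B : Matrix (Fin (n + 2)) (Fin (n + 2)) K))
    (hrank : Module.finrank K (Submodule.span K (Fset G)) = n + 1)
    (u v : Fin (n + 2) → K) (hu : u 0 ≠ 0) (hv : v 0 ≠ 0)
    (B : ℕ → Matrix.GeneralLinearGroup (Fin (n + 2)) K) (hB : ∀ m, B m ∈ G)
    (hlim : Tendsto (fun m => (B m : Matrix (Fin (n + 2)) (Fin (n + 2)) K).mulVec u)
      atTop (𝓝 v))
    (hblock : ∃ C : ℝ, ∀ m, ∀ i j : Fin (n + 1),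
      ‖(B m : Matrix (Fin (n + 2)) (Fin (n + 2)) K) i.castSucc j.castSucc‖ ≤ C) :
    ∃ C : ℝ, ∀ m, ∀ i j : Fin (n + 2),
      ‖(B m : Matrix (Fin (n + 2)) (Fin (n + 2)) K) i j‖ ≤ C := by
  obtain ⟨C₀, hC₀⟩ := hblock
  set C : ℝ := max C₀ 0 with hCdef
  have hC0 : (0:ℝ) ≤ C := le_max_right _ _
  set last : Fin (n+2) := Fin.last (n+1) with hlastdef
  -- abbreviation for the matrix of B m
  set b : ℕ → Matrix (Fin (n+2)) (Fin (n+2)) K := fun m => (B m : Matrix (Fin (n+2)) (Fin (n+2)) K)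
    with hbdef
  have hS' : ∀ m, (∀ i j : Fin (n+2), i < j → b m i j = 0) ∧
      (∀ i j : Fin (n+2), b m i i = b m j j) := fun m => hS (B m) (hB m)
  -- block entries are bounded
  have hblk : ∀ m, ∀ i j : Fin (n+2), (i:ℕ) ≤ n → (j:ℕ) ≤ n → ‖b m i j‖ ≤ C := by
    intro m i j hi hj
    have hi' : i = (⟨(i:ℕ), Nat.lt_succ_of_le hi⟩ : Fin (n+1)).castSucc := by
      ext; simp
    have hj' : j = (⟨(j:ℕ), Nat.lt_succ_of_le hj⟩ : Fin (n+1)).castSucc := by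
      ext; simp
    rw [hi', hj']
    exact (hC₀ m _ _).trans (le_max_left _ _)
  -- diagonal entries are bounded
  have hdiag : ∀ m, ∀ i : Fin (n+2), ‖b m i i‖ ≤ C := by
    intro m i
    rw [(hS' m).2 i 0]
    exact hblk m 0 0 (by simp) (by simp)
  -- entries of C_m = b m - (b m 0 0) • 1 in the block are bounded by 2C
  have hCm : ∀ m, ∀ i j : Fin (n+2), (i:ℕ) ≤ n → (j:ℕ) ≤ n →
      ‖(b m - b m 0 0 • (1 : Matrix (Fin (n+2)) (Fin (n+2)) K)) i j‖ ≤ 2*C := by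
    intro m i j hi hj
    have h1 : (b m - b m 0 0 • (1 : Matrix (Fin (n+2)) (Fin (n+2)) K)) i j
        = b m i j - b m 0 0 * (1 : Matrix (Fin (n+2)) (Fin (n+2)) K) i j := by
      simp [Matrix.sub_apply, Matrix.smul_apply, smul_eq_mul]
    rw [h1]
    have h2 : ‖(1 : Matrix (Fin (n+2)) (Fin (n+2)) K) i j‖ ≤ 1 := by
      by_cases hij : i = j
      · subst hij; simp
      · rw [Matrix.one_apply_ne hij]; simp
    calc ‖b m i j - b m 0 0 * (1 : Matrix (Fin (n+2)) (Fin (n+2)) K) i j‖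
        ≤ ‖b m i j‖ + ‖b m 0 0‖ * ‖(1 : Matrix (Fin (n+2)) (Fin (n+2)) K) i j‖ := by
          rw [← norm_mul]; exact norm_sub_le _ _
      _ ≤ C + C * 1 := by
          gcongr
          · exact hblk m i j hi hj
          · exact hdiag m 0
      _ = 2*C := by ring
  -- commutation of the nilpotent parts
  have hcomm : ∀ m, ∀ A : Matrix.GeneralLinearGroup (Fin (n+2)) K, A ∈ G → ∀ (γ : K),
      (b m - b m 0 0 • (1 : Matrix (Fin (n+2)) (Fin (n+2)) K)) *
        ((A : Matrix (Fin (n+2)) (Fin (n+2)) K) - γ • 1)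
      = ((A : Matrix (Fin (n+2)) (Fin (n+2)) K) - γ • 1) *
        (b m - b m 0 0 • (1 : Matrix (Fin (n+2)) (Fin (n+2)) K)) := by
    intro m A hA γ
    have h : b m * (A : Matrix (Fin (n+2)) (Fin (n+2)) K)
        = (A : Matrix (Fin (n+2)) (Fin (n+2)) K) * b m := by
      have := hGcomm (B m) (hB m) A hA
      calc b m * (A : Matrix (Fin (n+2)) (Fin (n+2)) K) = ((B m * A : Matrix.GeneralLinearGroup (Fin (n+2)) K) : Matrix (Fin (n+2)) (Fin (n+2)) K) := rfl
        _ = ((A * B m : Matrix.GeneralLinearGroup (Fin (n+2)) K) : Matrix (Fin (n+2)) (Fin (n+2)) K) := by rw [this]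
        _ = (A : Matrix (Fin (n+2)) (Fin (n+2)) K) * b m := rfl
    simp only [Matrix.sub_mul, Matrix.mul_sub, Matrix.smul_mul, Matrix.mul_smul,
      Matrix.one_mul, Matrix.mul_one, h, smul_smul, mul_comm]
    module
  -- the linear functional w ↦ ((b m - μ_m I) w)_{last} is bounded on each element of F
  have hF : ∀ w ∈ Fset G, ∃ D : ℝ, ∀ m,
      ‖(((b m - b m 0 0 • (1 : Matrix (Fin (n+2)) (Fin (n+2)) K)) *ᵥ w) last)‖ ≤ D := by
    rintro w ⟨A, hA, i, hi, rfl⟩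
    have hi' : (i:ℕ) ≤ n := by omega
    set a : Matrix (Fin (n+2)) (Fin (n+2)) K := (A : Matrix (Fin (n+2)) (Fin (n+2)) K) with hadef
    set Na : Matrix (Fin (n+2)) (Fin (n+2)) K := a - a i i • 1 with hNadef
    refine ⟨∑ k : Fin (n+2), ‖Na last k‖ * (2*C), fun m => ?_⟩
    set Cm : Matrix (Fin (n+2)) (Fin (n+2)) K := b m - b m 0 0 • 1 with hCmdef
    have h1 : Cm *ᵥ (Na *ᵥ Pi.single i 1) = Na *ᵥ (Cm *ᵥ Pi.single i 1) := by
      rw [Matrix.mulVec_mulVec, Matrix.mulVec_mulVec, hcomm m A hA]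
    rw [h1, Matrix.mulVec_single]
    have h2 : (Na *ᵥ MulOpposite.op (1:K) • Cm.col i) last = ∑ k, Na last k * (Cm k i) := by
      simp [Matrix.mulVec, dotProduct, mul_one]
    rw [h2]
    refine (norm_sum_le _ _).trans (Finset.sum_le_sum fun k _ => ?_)
    by_cases hk : (k:ℕ) ≤ n
    · rw [norm_mul]
      gcongr
      exact hCm m k i hk hi'
    · have hkl : k = last := by ext; simp only [hlastdef, Fin.val_last]; omega
      have hzero : Na last last = 0 := by
        have hd : a last last = a i i := (hS A hA).2 last i
        simp [hNadef, Matrix.sub_apply, Matrix.smul_apply, smul_eq_mul, hd]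
      rw [hkl, hzero]
      simp only [norm_zero, zero_mul]
      positivity
  -- extend boundedness to the span of F
  have hspan : ∀ w ∈ Submodule.span K (Fset G), ∃ D : ℝ, ∀ m,
      ‖(((b m - b m 0 0 • (1 : Matrix (Fin (n+2)) (Fin (n+2)) K)) *ᵥ w) last)‖ ≤ D := by
    intro w hw
    induction hw using Submodule.span_induction with
    | mem x hx => exact hF x hx
    | zero => exact ⟨0, fun m => by simp⟩
    | add x y hx hy ihx ihy =>
        obtain ⟨D₁, h₁⟩ := ihx; obtain ⟨D₂, h₂⟩ := ihy
        refine ⟨D₁ + D₂, fun m => ?_⟩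
        rw [Matrix.mulVec_add]
        exact (norm_add_le _ _).trans (add_le_add (h₁ m) (h₂ m))
    | smul c x hx ihx =>
        obtain ⟨D, hD⟩ := ihx
        refine ⟨‖c‖ * D, fun m => ?_⟩
        rw [Matrix.mulVec_smul]
        simp only [Pi.smul_apply, norm_smul]
        exact mul_le_mul_of_nonneg_left (hD m) (norm_nonneg c)
  -- span F = ker (proj 0)
  have hle : Submodule.span K (Fset G) ≤
      LinearMap.ker (LinearMap.proj (R := K) (φ := fun _ : Fin (n+2) => K) 0) := by
    rw [Submodule.span_le]
    rintro w ⟨A, hA, i, hi, rfl⟩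
    simp only [SetLike.mem_coe, LinearMap.mem_ker, LinearMap.proj_apply, Function.eval]
    rw [Matrix.mulVec_single]
    by_cases h0 : i = 0
    · subst h0
      simp [Matrix.sub_apply, Matrix.smul_apply, smul_eq_mul]
    · have hlt : (0 : Fin (n+2)) < i := Fin.pos_of_ne_zero h0
      have hz : (A : Matrix (Fin (n+2)) (Fin (n+2)) K) 0 i = 0 := (hS A hA).1 0 i hlt
      have hone : (1 : Matrix (Fin (n+2)) (Fin (n+2)) K) 0 i = 0 :=
        Matrix.one_apply_ne (by exact fun h => h0 (by simpa using h.symm))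
      simp [Matrix.sub_apply, Matrix.smul_apply, smul_eq_mul, hz, hone]
  have hkerrank : Module.finrank K
      (LinearMap.ker (LinearMap.proj (R := K) (φ := fun _ : Fin (n+2) => K) 0)) = n + 1 := by
    have hsurj : Function.Surjective
        (LinearMap.proj (R := K) (φ := fun _ : Fin (n+2) => K) 0) :=
      fun k => ⟨Pi.single 0 k, by simp⟩
    have h := LinearMap.finrank_range_add_finrank_ker
      (LinearMap.proj (R := K) (φ := fun _ : Fin (n+2) => K) 0)
    rw [LinearMap.range_eq_top.2 hsurj] at h
    simp only [finrank_top, Module.finrank_self, Module.finrank_fin_fun] at h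
    omega
  have hspaneq : Submodule.span K (Fset G) =
      LinearMap.ker (LinearMap.proj (R := K) (φ := fun _ : Fin (n+2) => K) 0) :=
    Submodule.eq_of_le_of_finrank_eq hle (by rw [hrank, hkerrank])
  have hsingle : ∀ j : Fin (n+2), j ≠ 0 →
      Pi.single j (1:K) ∈ Submodule.span K (Fset G) := by
    intro j hj
    rw [hspaneq]
    simp [LinearMap.mem_ker, Function.eval, Pi.single_eq_of_ne (Ne.symm hj)]
  -- boundedness of last-row entries b m last j for j ≠ 0
  have hrow : ∀ j : Fin (n+2), ∃ D : ℝ, 0 ≤ D ∧ ∀ m, j ≠ 0 → ‖b m last j‖ ≤ D := by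
    intro j
    by_cases hj0 : j = 0
    · exact ⟨0, le_refl 0, fun m hj => absurd hj0 hj⟩
    by_cases hjl : j = last
    · exact ⟨C, hC0, fun m _ => by rw [hjl]; exact hdiag m last⟩
    · have hj' : (j:ℕ) ≤ n := by
        have : (j:ℕ) < n + 2 := j.isLt
        have hne : (j:ℕ) ≠ n + 1 := fun h => hjl (by ext; simp [hlastdef, h])
        omega
      obtain ⟨D, hD⟩ := hspan (Pi.single j 1) (hsingle j hj0)
      refine ⟨max D 0, le_max_right _ _, fun m _ => ?_⟩
      have hval : ((b m - b m 0 0 • (1 : Matrix (Fin (n+2)) (Fin (n+2)) K)) *ᵥ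
          Pi.single j 1) last = b m last j := by
        rw [Matrix.mulVec_single]
        have hone : (1 : Matrix (Fin (n+2)) (Fin (n+2)) K) last j = 0 :=
          Matrix.one_apply_ne (fun h => hjl h.symm)
        simp [Matrix.sub_apply, Matrix.smul_apply, smul_eq_mul, hone]
      have := hD m
      rw [hval] at this
      exact this.trans (le_max_left _ _)
    -- boundedness of the limit sequence at the last coordinate
  obtain ⟨M, hM⟩ : ∃ M : ℝ, ∀ m, ‖(b m *ᵥ u) last‖ ≤ M := by
    have h := (tendsto_pi_nhds.1 hlim) last
    have hb := h.norm.bddAbove_range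
    obtain ⟨M, hM⟩ := hb
    exact ⟨M, fun m => hM ⟨m, rfl⟩⟩
  choose f hf0 hf using hrow
  -- bound for b m last 0
  have h00 : ∃ D : ℝ, ∀ m, ‖b m last 0‖ ≤ D := by
    refine ⟨(M + ∑ j ∈ Finset.univ.erase (0 : Fin (n+2)), f j * ‖u j‖) / ‖u 0‖, fun m => ?_⟩
    rw [le_div_iff₀ (norm_pos_iff.2 hu)]
    have hsum : (b m *ᵥ u) last = ∑ j, b m last j * u j := by
      simp [Matrix.mulVec, dotProduct]
    have hsplit : b m last 0 * u 0 = (b m *ᵥ u) last -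
        ∑ j ∈ Finset.univ.erase (0 : Fin (n+2)), b m last j * u j := by
      rw [hsum, ← Finset.add_sum_erase _ _ (Finset.mem_univ (0 : Fin (n+2)))]
      ring
    calc ‖b m last 0‖ * ‖u 0‖ = ‖b m last 0 * u 0‖ := (norm_mul _ _).symm
      _ ≤ ‖(b m *ᵥ u) last‖ +
          ‖∑ j ∈ Finset.univ.erase (0 : Fin (n+2)), b m last j * u j‖ := by
            rw [hsplit]; exact norm_sub_le _ _
      _ ≤ M + ∑ j ∈ Finset.univ.erase (0 : Fin (n+2)), f j * ‖u j‖ := by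
          refine add_le_add (hM m) ((norm_sum_le _ _).trans (Finset.sum_le_sum ?_))
          intro j hj
          rw [norm_mul]
          exact mul_le_mul_of_nonneg_right (hf j m (Finset.ne_of_mem_erase hj)) (norm_nonneg _)
  obtain ⟨D₀, hD₀⟩ := h00
  -- assemble the global bound
  have hall : ∀ p : Fin (n+2) × Fin (n+2), ∃ D : ℝ, 0 ≤ D ∧ ∀ m, ‖b m p.1 p.2‖ ≤ D := by
    rintro ⟨i, j⟩
    by_cases hij : i < j
    · exact ⟨0, le_refl 0, fun m => by rw [(hS' m).1 i j hij]; simp⟩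
    by_cases hi : (i:ℕ) ≤ n
    · have hj : (j:ℕ) ≤ n := le_trans (Fin.le_iff_val_le_val.1 (not_lt.1 hij)) hi
      exact ⟨C, hC0, fun m => hblk m i j hi hj⟩
    · have hil : i = last := by ext; simp only [hlastdef, Fin.val_last]; omega
      by_cases hj0 : j = 0
      · exact ⟨max D₀ 0, le_max_right _ _, fun m => by
          rw [hil, hj0]; exact (hD₀ m).trans (le_max_left _ _)⟩
      · exact ⟨f j, hf0 j, fun m => by rw [hil]; exact hf j m hj0⟩
  choose D hD0 hD using hall
  refine ⟨∑ p : Fin (n+2) × Fin (n+2), D p, fun m i j => ?_⟩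
  exact (hD (i, j) m).trans
    (Finset.single_le_sum (fun p _ => hD0 p) (Finset.mem_univ (i, j)))
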